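/- Contraction C2 preserves the intersection data: let A be an m×m symmetric matrix over ZMod 2 (with m ≥ 3) and let v, p, q be three pairwise distinct indices such that A v v = 1, A v p = 1, A v q = 1, A v k = 0 for every index k not in {v,p,q}, and A p q = 0 (i.e., v is an odd vertex of valency 2, attached exactly to p and q, which are not adjacent to each other). Let B be the (m−1)×(m−1) matrix obtained from A by deleting the row and column indexed by v and adding 1 to each of the entries (p,p), (q,q), (p,q) and (q,p) (flipping the parities of p and q and making them adjacent). Then det B = det A and rank A = rank B + 1 (so the corank is preserved). -/

import Mathlib

open Matrix

section aux
variable {K : Type*} [Field K]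

private lemma range_prodMap' {V W V' W' : Type*} [AddCommGroup V] [AddCommGroup W]
    [AddCommGroup V'] [AddCommGroup W'] [Module K V] [Module K W] [Module K V'] [Module K W']
    (f : V →ₗ[K] V') (g : W →ₗ[K] W') :
    LinearMap.range (f.prodMap g) = (LinearMap.range f).prod (LinearMap.range g) := by
  ext ⟨a, b⟩
  constructor
  · rintro ⟨⟨x, y⟩, h⟩
    rw [Prod.ext_iff] at h
    exact ⟨⟨x, h.1⟩, ⟨y, h.2⟩⟩
  · rintro ⟨⟨x, rfl⟩, ⟨y, rfl⟩⟩
    exact ⟨(x, y), rfl⟩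

private lemma finrank_submodule_prod {V W : Type*} [AddCommGroup V] [AddCommGroup W]
    [Module K V] [Module K W] [FiniteDimensional K V] [FiniteDimensional K W]
    (p : Submodule K V) (q : Submodule K W) :
    Module.finrank K (p.prod q) = Module.finrank K p + Module.finrank K q := by
  have hb : Function.Bijective
      (LinearMap.codRestrict (p.prod q) ((p.subtype).prodMap (q.subtype))
        (fun x => ⟨x.1.2, x.2.2⟩)) := by
    constructor
    · intro x y hxy
      have h := congrArg Subtype.val hxy
      simp only [LinearMap.codRestrict_apply, LinearMap.prodMap_apply, Prod.mk.injEq,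
        Submodule.coe_subtype, Subtype.val_inj] at h
      exact Prod.ext (Subtype.ext (congrArg (fun z : p.prod q => (z : V × W).1) h))
        (Subtype.ext (congrArg (fun z : p.prod q => (z : V × W).2) h))
    · rintro ⟨⟨a, b⟩, ha, hb⟩
      exact ⟨(⟨a, ha⟩, ⟨b, hb⟩), rfl⟩
  rw [← Module.finrank_prod (R := K) (M := p) (M' := q)]
  exact (LinearEquiv.ofBijective _ hb).finrank_eq.symm
end aux

section blockrank
variable {K : Type*} [Field K] {m n : Type*} [Fintype m] [Fintype n] [DecidableEq m] [DecidableEq n]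

private lemma mulVecLin_fromBlocks_diag (A : Matrix m m K) (D : Matrix n n K) :
    (Matrix.fromBlocks A 0 0 D).mulVecLin =
      ((LinearEquiv.sumArrowLequivProdArrow m n K K).symm : _ →ₗ[K] _) ∘ₗ
        (A.mulVecLin.prodMap D.mulVecLin) ∘ₗ
        ((LinearEquiv.sumArrowLequivProdArrow m n K K) : _ →ₗ[K] _) := by
  ext x i
  cases i <;>
    simp [Matrix.mulVecLin_apply, Matrix.mulVec, Matrix.fromBlocks, dotProduct,
      Fintype.sum_sum_type, LinearEquiv.sumArrowLequivProdArrow, Equiv.sumArrowEquivProdArrow]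

private lemma rank_fromBlocks_diag (A : Matrix m m K) (D : Matrix n n K) :
    (Matrix.fromBlocks A 0 0 D).rank = A.rank + D.rank := by
  rw [Matrix.rank, mulVecLin_fromBlocks_diag]
  rw [LinearMap.range_comp, LinearMap.range_comp_of_range_eq_top _
    (LinearEquiv.range (LinearEquiv.sumArrowLequivProdArrow m n K K))]
  rw [LinearEquiv.finrank_map_eq]
  rw [range_prodMap', finrank_submodule_prod]
  rfl
end blockrank

section schur
variable {K : Type*} [Field K] {n : Type*} [Fintype n] [DecidableEq n]

private lemma rank_fromBlocks_one₁₁ (B : Matrix Unit n K) (C : Matrix n Unit K) (D : Matrix n n K) :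
    (Matrix.fromBlocks (1 : Matrix Unit Unit K) B C D).rank = (D - C * B).rank + 1 := by
  haveI : Invertible (1 : Matrix Unit Unit K) := invertibleOne
  rw [Matrix.fromBlocks_eq_of_invertible₁₁ (A := (1 : Matrix Unit Unit K))]
  have h1 : IsUnit (Matrix.fromBlocks (1 : Matrix Unit Unit K) 0 (C * ⅟(1 : Matrix Unit Unit K)) 1).det := by
    rw [Matrix.det_fromBlocks_zero₁₂]; simp
  have h2 : IsUnit (Matrix.fromBlocks (1 : Matrix Unit Unit K) (⅟(1 : Matrix Unit Unit K) * B) 0 1).det := by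
    rw [Matrix.det_fromBlocks_zero₂₁]; simp
  rw [Matrix.rank_mul_eq_left_of_isUnit_det _ _ h2, Matrix.rank_mul_eq_right_of_isUnit_det _ _ h1,
    rank_fromBlocks_diag, Matrix.rank_one]
  simp [add_comm]
end schur

/-- Contraction C2: blowing down an odd curve `v` of valency 2 attached exactly to
non-adjacent `p` and `q` (delete the row and column of `v`, flip the parities of `p`
and `q`, and make them adjacent) preserves the determinant and drops the rank of the
mod-2 intersection matrix by exactly one (so the corank is preserved). -/
theorem contraction_C2 {m : ℕ} (hm : 3 ≤ m) (A : Matrix (Fin m) (Fin m) (ZMod 2))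
    (hA : A.IsSymm) (v p q : Fin m)
    (hvp : v ≠ p) (hvq : v ≠ q) (hpq : p ≠ q)
    (hvv : A v v = 1) (hAvp : A v p = 1) (hAvq : A v q = 1)
    (hval : ∀ k, k ≠ v → k ≠ p → k ≠ q → A v k = 0)
    (hApq : A p q = 0) :
    (A.submatrix (Subtype.val : {k : Fin m // k ≠ v} → Fin m) Subtype.val
        + Matrix.single (⟨p, hvp.symm⟩ : {k : Fin m // k ≠ v}) (⟨p, hvp.symm⟩ : {k : Fin m // k ≠ v}) 1
        + Matrix.single (⟨q, hvq.symm⟩ : {k : Fin m // k ≠ v}) (⟨q, hvq.symm⟩ : {k : Fin m // k ≠ v}) 1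
        + Matrix.single (⟨p, hvp.symm⟩ : {k : Fin m // k ≠ v}) (⟨q, hvq.symm⟩ : {k : Fin m // k ≠ v}) 1
        + Matrix.single (⟨q, hvq.symm⟩ : {k : Fin m // k ≠ v}) (⟨p, hvp.symm⟩ : {k : Fin m // k ≠ v}) 1).det
        = A.det ∧
      A.rank = (A.submatrix (Subtype.val : {k : Fin m // k ≠ v} → Fin m) Subtype.val
        + Matrix.single (⟨p, hvp.symm⟩ : {k : Fin m // k ≠ v}) (⟨p, hvp.symm⟩ : {k : Fin m // k ≠ v}) 1
        + Matrix.single (⟨q, hvq.symm⟩ : {k : Fin m // k ≠ v}) (⟨q, hvq.symm⟩ : {k : Fin m // k ≠ v}) 1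
        + Matrix.single (⟨p, hvp.symm⟩ : {k : Fin m // k ≠ v}) (⟨q, hvq.symm⟩ : {k : Fin m // k ≠ v}) 1
        + Matrix.single (⟨q, hvq.symm⟩ : {k : Fin m // k ≠ v}) (⟨p, hvp.symm⟩ : {k : Fin m // k ≠ v}) 1).rank
        + 1 := by
  classical
  -- the reindexing equivalence
  let e : Unit ⊕ {k : Fin m // k ≠ v} ≃ Fin m :=
    { toFun := Sum.elim (fun _ => v) Subtype.val
      invFun := fun k => if h : k = v then Sum.inl () else Sum.inr ⟨k, h⟩
      left_inv := fun i => by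
        cases i with
        | inl u => simp
        | inr k => simp [k.2]
      right_inv := fun k => by by_cases h : k = v <;> simp [h] }
  let Cm : Matrix {k : Fin m // k ≠ v} Unit (ZMod 2) := Matrix.of fun k _ => A k.1 v
  let Bm : Matrix Unit {k : Fin m // k ≠ v} (ZMod 2) := Matrix.of fun _ l => A v l.1
  let Dm : Matrix {k : Fin m // k ≠ v} {k : Fin m // k ≠ v} (ZMod 2) :=
    A.submatrix (Subtype.val : {k : Fin m // k ≠ v} → Fin m) Subtype.val
  -- the block decomposition of `A`
  have hsub : A.submatrix e e = Matrix.fromBlocks (1 : Matrix Unit Unit (ZMod 2)) Bm Cm Dm := by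
    ext i j
    cases i <;> cases j <;>
      simp [e, Bm, Cm, Dm, Matrix.fromBlocks, hvv, Matrix.one_apply]
  -- the statement's matrix is the Schur complement
  have hBS : (A.submatrix (Subtype.val : {k : Fin m // k ≠ v} → Fin m) Subtype.val
        + Matrix.single (⟨p, hvp.symm⟩ : {k : Fin m // k ≠ v}) (⟨p, hvp.symm⟩ : {k : Fin m // k ≠ v}) 1
        + Matrix.single (⟨q, hvq.symm⟩ : {k : Fin m // k ≠ v}) (⟨q, hvq.symm⟩ : {k : Fin m // k ≠ v}) 1
        + Matrix.single (⟨p, hvp.symm⟩ : {k : Fin m // k ≠ v}) (⟨q, hvq.symm⟩ : {k : Fin m // k ≠ v}) 1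
        + Matrix.single (⟨q, hvq.symm⟩ : {k : Fin m // k ≠ v}) (⟨p, hvp.symm⟩ : {k : Fin m // k ≠ v}) 1)
      = Dm - Cm * Bm := by
    ext ⟨k, hk⟩ ⟨l, hl⟩
    have hkv : A k v = A v k := hA.apply v k
    have hCB : (Cm * Bm) ⟨k, hk⟩ ⟨l, hl⟩ = A v k * A v l := by
      simp [Cm, Bm, Matrix.mul_apply, hkv]
    have hAk : A v k = if p = k then 1 else if q = k then 1 else 0 := by
      split_ifs with h1 h2
      · rw [← h1]; exact hAvp
      · rw [← h2]; exact hAvq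
      · exact hval k hk (fun h => h1 h.symm) (fun h => h2 h.symm)
    have hAl : A v l = if p = l then 1 else if q = l then 1 else 0 := by
      split_ifs with h1 h2
      · rw [← h1]; exact hAvp
      · rw [← h2]; exact hAvq
      · exact hval l hl (fun h => h1 h.symm) (fun h => h2 h.symm)
    simp only [Matrix.add_apply, Matrix.sub_apply, Matrix.submatrix_apply, hCB, Dm,
      Matrix.single, Matrix.of_apply, Subtype.mk.injEq]
    rw [CharTwo.sub_eq_add, hAk, hAl]
    rcases eq_or_ne p k with rfl | hk1
    · rcases eq_or_ne q l with rfl | hl2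
      · simp [hpq, Ne.symm hpq]
      · rcases eq_or_ne p l with rfl | hl1
        · simp [hpq, Ne.symm hpq]
        · simp [hpq, Ne.symm hpq, hl1, hl2]
    · rcases eq_or_ne q k with rfl | hk2
      · rcases eq_or_ne p l with rfl | hl1
        · simp [hpq, Ne.symm hpq]
        · rcases eq_or_ne q l with rfl | hl2
          · simp [hpq, Ne.symm hpq]
          · simp [hpq, Ne.symm hpq, hl1, hl2]
      · simp [hk1, hk2]
  constructor
  · calc (A.submatrix (Subtype.val : {k : Fin m // k ≠ v} → Fin m) Subtype.val
        + Matrix.single (⟨p, hvp.symm⟩ : {k : Fin m // k ≠ v}) (⟨p, hvp.symm⟩ : {k : Fin m // k ≠ v}) 1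
        + Matrix.single (⟨q, hvq.symm⟩ : {k : Fin m // k ≠ v}) (⟨q, hvq.symm⟩ : {k : Fin m // k ≠ v}) 1
        + Matrix.single (⟨p, hvp.symm⟩ : {k : Fin m // k ≠ v}) (⟨q, hvq.symm⟩ : {k : Fin m // k ≠ v}) 1
        + Matrix.single (⟨q, hvq.symm⟩ : {k : Fin m // k ≠ v}) (⟨p, hvp.symm⟩ : {k : Fin m // k ≠ v}) 1).det
        = (Dm - Cm * Bm).det := by rw [hBS]
      _ = (Matrix.fromBlocks (1 : Matrix Unit Unit (ZMod 2)) Bm Cm Dm).det :=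
        (Matrix.det_fromBlocks_one₁₁ Bm Cm Dm).symm
      _ = (A.submatrix e e).det := by rw [hsub]
      _ = A.det := Matrix.det_submatrix_equiv_self e A
  · calc A.rank = (A.submatrix e e).rank := (Matrix.rank_submatrix A e e).symm
      _ = (Matrix.fromBlocks (1 : Matrix Unit Unit (ZMod 2)) Bm Cm Dm).rank := by rw [hsub]
      _ = (Dm - Cm * Bm).rank + 1 := rank_fromBlocks_one₁₁ Bm Cm Dm
      _ = _ := by rw [hBS]
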